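/- Let S be an n-dimensional simplex in ℝⁿ (the convex hull of n+1 affinely independent points a₀, …, aₙ) and Y a real vector space. Every convex multifunction F : S → Set Y with nonempty values admits an affine selection, i.e., there exists an affine map f : ℝⁿ → Y with f(x) ∈ F(x) for all x ∈ S. -/

import Mathlib

open Pointwise

theorem stmt_3 {n : ℕ} {Y : Type*} [AddCommGroup Y] [Module ℝ Y]
    (a : Fin (n + 1) → (Fin n → ℝ)) (ha : AffineIndependent ℝ a)
    (F : (Fin n → ℝ) → Set Y)
    (hne : ∀ x ∈ convexHull ℝ (Set.range a), (F x).Nonempty)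
    (hF : ∀ x ∈ convexHull ℝ (Set.range a), ∀ y ∈ convexHull ℝ (Set.range a),
        ∀ t ∈ Set.Icc (0:ℝ) 1,
        t • F x + (1 - t) • F y ⊆ F (t • x + (1 - t) • y)) :
    ∃ f : (Fin n → ℝ) →ᵃ[ℝ] Y, ∀ x ∈ convexHull ℝ (Set.range a), f x ∈ F x := by
  classical
  set C := convexHull ℝ (Set.range a) with hC
  -- key lemma: finite convex combinations
  have key : ∀ s : Finset (Fin (n+1)), ∀ w : Fin (n+1) → ℝ, ∀ x : Fin (n+1) → (Fin n → ℝ),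
      ∀ z : Fin (n+1) → Y, (∀ i ∈ s, 0 ≤ w i) → (∑ i ∈ s, w i = 1) →
      (∀ i ∈ s, x i ∈ C) → (∀ i ∈ s, z i ∈ F (x i)) →
      (∑ i ∈ s, w i • z i) ∈ F (∑ i ∈ s, w i • x i) := by
    intro s
    induction s using Finset.induction with
    | empty => intro w x z _ hsum _ _; simp at hsum
    | insert _ _ hi ih =>
      rename_i i s
      intro w x z hw hsum hx hz
      rw [Finset.sum_insert hi] at hsum ⊢
      rw [Finset.sum_insert hi]
      by_cases h1 : w i = 1
      · have hrest : ∀ j ∈ s, w j = 0 := by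
          intro j hj
          have h0 : ∑ k ∈ s, w k = 0 := by linarith
          have := (Finset.sum_eq_zero_iff_of_nonneg (fun k hk => hw k (Finset.mem_insert_of_mem hk))).mp h0
          exact this j hj
        have : ∑ j ∈ s, w j • z j = 0 := Finset.sum_eq_zero fun j hj => by rw [hrest j hj, zero_smul]
        have hx0 : ∑ j ∈ s, w j • x j = 0 := Finset.sum_eq_zero fun j hj => by rw [hrest j hj, zero_smul]
        rw [this, hx0, add_zero, add_zero, h1, one_smul, one_smul]
        exact hz i (Finset.mem_insert_self i s)
      · have hwi : 0 ≤ w i := hw i (Finset.mem_insert_self i s)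
        have hws : ∑ j ∈ s, w j = 1 - w i := by linarith
        have hwilt : w i < 1 := by
          rcases lt_or_eq_of_le (show w i ≤ 1 by
            have : 0 ≤ ∑ j ∈ s, w j := Finset.sum_nonneg fun j hj => hw j (Finset.mem_insert_of_mem hj)
            linarith) with h | h
          · exact h
          · exact absurd h h1
        have hpos : 0 < 1 - w i := by linarith
        set w' : Fin (n+1) → ℝ := fun j => w j / (1 - w i) with hw'
        have hw'nn : ∀ j ∈ s, 0 ≤ w' j := fun j hj =>
          div_nonneg (hw j (Finset.mem_insert_of_mem hj)) hpos.le
        have hw'sum : ∑ j ∈ s, w' j = 1 := by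
          rw [hw']; rw [← Finset.sum_div, hws, div_self hpos.ne']
        have hmem := ih w' x z hw'nn hw'sum (fun j hj => hx j (Finset.mem_insert_of_mem hj))
          (fun j hj => hz j (Finset.mem_insert_of_mem hj))
        have hyC : (∑ j ∈ s, w' j • x j) ∈ C := by
          rw [hC]
          exact (convex_convexHull ℝ _).sum_mem hw'nn hw'sum
            (fun j hj => hx j (Finset.mem_insert_of_mem hj))
        have happ := hF (x i) (hx i (Finset.mem_insert_self i s)) _ hyC (w i)
          ⟨hwi, hwilt.le⟩
        have hz' : w i • z i + (1 - w i) • (∑ j ∈ s, w' j • z j) ∈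
            w i • F (x i) + (1 - w i) • F (∑ j ∈ s, w' j • x j) := by
          exact Set.add_mem_add (Set.smul_mem_smul_set (hz i (Finset.mem_insert_self i s)))
            (Set.smul_mem_smul_set hmem)
        have hres := happ hz'
        have hxeq : w i • x i + (1 - w i) • (∑ j ∈ s, w' j • x j) = w i • x i + ∑ j ∈ s, w j • x j := by
          congr 1
          rw [Finset.smul_sum]
          refine Finset.sum_congr rfl fun j hj => ?_
          rw [hw', smul_smul, mul_div_cancel₀ _ hpos.ne']
        have hzeq : w i • z i + (1 - w i) • (∑ j ∈ s, w' j • z j) = w i • z i + ∑ j ∈ s, w j • z j := by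
          congr 1
          rw [Finset.smul_sum]
          refine Finset.sum_congr rfl fun j hj => ?_
          rw [hw', smul_smul, mul_div_cancel₀ _ hpos.ne']
        rw [hxeq, hzeq] at hres
        exact hres
  -- choose values at vertices
  have haC : ∀ i, a i ∈ C := fun i => subset_convexHull ℝ _ (Set.mem_range_self i)
  choose y hy using fun i => hne (a i) (haC i)
  -- build affine basis
  have htop : affineSpan ℝ (Set.range a) = ⊤ := by
    rw [ha.affineSpan_eq_top_iff_card_eq_finrank_add_one]
    simp [Module.finrank_fintype_fun_eq_card]
  let b : AffineBasis (Fin (n+1)) ℝ (Fin n → ℝ) := ⟨a, ha, htop⟩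
  let f : (Fin n → ℝ) →ᵃ[ℝ] Y :=
    ∑ i, ((LinearMap.toSpanSingleton ℝ Y (y i)).toAffineMap).comp (b.coord i)
  have hf : ∀ x, f x = ∑ i, b.coord i x • y i := by
    intro x
    show (∑ i, ((LinearMap.toSpanSingleton ℝ Y (y i)).toAffineMap).comp (b.coord i)) x = _
    induction (Finset.univ : Finset (Fin (n+1))) using Finset.induction with
    | empty => simp
    | insert _ _ hi ih =>
      rename_i i s
      rw [Finset.sum_insert hi, Finset.sum_insert hi]
      rw [show ∀ (g h : (Fin n → ℝ) →ᵃ[ℝ] Y), (g + h) x = g x + h x from fun g h => rfl, ih]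
      simp [LinearMap.toSpanSingleton_apply]
  have hfa : ∀ i, f (a i) = y i := by
    intro i
    rw [hf]
    have hba : ∀ j, b j = a j := fun j => rfl
    have hcoord : ∀ j, b.coord j (a i) = if j = i then 1 else 0 := by
      intro j
      rw [← hba i]
      rcases eq_or_ne j i with h | h
      · simp [h, b.coord_apply_eq i]
      · simp [h, b.coord_apply_ne h]
    rw [Finset.sum_congr rfl (fun j _ => by rw [hcoord j])]
    simp
  refine ⟨f, fun x hx => ?_⟩
  have hxC : x ∈ C := hx
  rw [hC, convexHull_range_eq_exists_affineCombination] at hx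
  obtain ⟨s, w, hw0, hw1, hxw⟩ := hx
  have hmap : f x = ∑ i ∈ s, w i • f (a i) := by
    rw [← hxw, Finset.map_affineCombination s a w hw1 f,
      Finset.affineCombination_eq_linear_combination _ _ _ hw1]
    rfl
  have hxw' : x = ∑ i ∈ s, w i • a i := by
    rw [← hxw, Finset.affineCombination_eq_linear_combination _ _ _ hw1]
  rw [hmap, hxw']
  exact key s w a (fun i => f (a i)) hw0 hw1 (fun i _ => haC i)
    (fun i _ => by show f (a i) ∈ F (a i); rw [hfa i]; exact hy i)
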